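/- Iterating the stable most-significant-bit partition k times radix-sorts the bit-reversed values: applying, for ℓ = 1 to k, a stable partition by the ℓ-th most significant bit to a list of values in [0,2^k) yields the list sorted by the bit-reversal inv(·,k) of the values. -/
import Mathlib


/-- `natInv c k` is the value whose `k`-bit representation is the reversal of
that of `c`. -/
def natInv (c k : ℕ) : ℕ :=
  ∑ t ∈ Finset.range k, if c.testBit (k - 1 - t) then 2 ^ t else 0

/-- One stable partition step by bit `ℓ` (bits numbered 1 = most significant
to `k` = least significant): all values with bit `ℓ` equal to 0 first, in
order, then those with bit `ℓ` equal to 1, in order. -/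
def msbStep (k ℓ : ℕ) (L : List ℕ) : List ℕ :=
  L.filter (fun v => !v.testBit (k - ℓ)) ++ L.filter (fun v => v.testBit (k - ℓ))

namespace RadixAux

/-- Low `i` bits of the bit-reversal of `v` (w.r.t. width `k`). -/
def M (k i v : ℕ) : ℕ :=
  ∑ t ∈ Finset.range i, if v.testBit (k - 1 - t) then 2 ^ t else 0

lemma M_succ (k i v : ℕ) :
    M k (i + 1) v = M k i v + (if v.testBit (k - 1 - i) then 2 ^ i else 0) :=
  Finset.sum_range_succ _ _

lemma M_lt (k i v : ℕ) : M k i v < 2 ^ i := by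
  induction i with
  | zero => simp [M]
  | succ i ih =>
    have hle : (if v.testBit (k - 1 - i) then 2 ^ i else 0) ≤ 2 ^ i := by
      split <;> simp
    have : M k (i + 1) v < 2 ^ i + 2 ^ i := by
      rw [M_succ]; omega
    calc M k (i + 1) v < 2 ^ i + 2 ^ i := this
      _ = 2 ^ (i + 1) := by ring

lemma step_pairwise (k i : ℕ) (L : List ℕ)
    (h : L.Pairwise (fun a b => M k i a ≤ M k i b)) :
    (msbStep k (i + 1) L).Pairwise (fun a b => M k (i + 1) a ≤ M k (i + 1) b) := by
  have hk : k - (i + 1) = k - 1 - i := by omega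
  rw [msbStep, hk, List.pairwise_append]
  refine ⟨?_, ?_, ?_⟩
  · refine (h.filter _).imp_of_mem ?_
    intro a b ha hb hab
    have ha' := (List.mem_filter.mp ha).2
    have hb' := (List.mem_filter.mp hb).2
    simp only [Bool.not_eq_true'] at ha' hb'
    rw [M_succ, M_succ, if_neg (by simp [ha']), if_neg (by simp [hb'])]
    omega
  · refine (h.filter _).imp_of_mem ?_
    intro a b ha hb hab
    have ha' := (List.mem_filter.mp ha).2
    have hb' := (List.mem_filter.mp hb).2
    rw [M_succ, M_succ, if_pos ha', if_pos hb']
    omega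
  · intro a ha b hb
    have ha' := (List.mem_filter.mp ha).2
    have hb' := (List.mem_filter.mp hb).2
    simp only [Bool.not_eq_true'] at ha'
    rw [M_succ, M_succ, if_neg (by simp [ha']), if_pos hb']
    have := M_lt k i a
    omega

end RadixAux

/-- Iterating the stable most-significant-bit partition for `ℓ = 1,…,k`
radix-sorts the bit-reversed values: the result is sorted nondecreasingly by
`natInv · k`. -/
theorem msb_partitions_radix_sort_inv (k : ℕ) (L : List ℕ)
    (h : ∀ v ∈ L, v < 2 ^ k) :
    ((List.range k).foldl (fun acc i => msbStep k (i + 1) acc) L).Pairwise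
      (fun a b => natInv a k ≤ natInv b k) := by
  have key : ∀ j, ((List.range j).foldl (fun acc i => msbStep k (i + 1) acc) L).Pairwise
      (fun a b => RadixAux.M k j a ≤ RadixAux.M k j b) := by
    intro j
    induction j with
    | zero =>
      simp only [List.range_zero, List.foldl_nil]
      have : ∀ a b : ℕ, RadixAux.M k 0 a ≤ RadixAux.M k 0 b := by
        intro a b; simp [RadixAux.M]
      clear h
      induction L with
      | nil => exact List.Pairwise.nil
      | cons x xs ih => exact List.Pairwise.cons (fun y _ => this x y) ih
    | succ j ih =>
      rw [List.range_succ, List.foldl_append, List.foldl_cons, List.foldl_nil]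
      exact RadixAux.step_pairwise k j _ ih
  exact key k
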